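/- arXiv:2309.07942 — 2 statements merged into one kernel-verified Lean document; each statement's English description precedes it below -/
import Mathlib

section
/- Isoperimetric inequality on ℤ^d: for every nonempty finite set Λ ⊂ ℤ^d, the inner vertex boundary ∂_in Λ = { x ∈ Λ : ∃ y ∉ Λ with |x − y|_1 = 1 } satisfies |Λ|^{1 − 1/d} ≤ |∂_in Λ|. -/
open Finset NNReal

lemma holder_eq {α ι : Type*} (s : Finset α) (u : Finset ι) (hu : u.Nonempty)
    (c : ι → α → ℝ≥0) :
    ∑ t ∈ s, ∏ i ∈ u, (c i t) ^ ((u.card : ℝ)⁻¹) ≤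
      ∏ i ∈ u, (∑ t ∈ s, c i t) ^ ((u.card : ℝ)⁻¹) := by
  have hk : (u.card : ℝ) ≠ 0 := Nat.cast_ne_zero.2 hu.card_ne_zero
  by_cases hz : ∃ i ∈ u, ∑ t ∈ s, c i t = 0
  · obtain ⟨i, hi, h0⟩ := hz
    have hc0 : ∀ t ∈ s, c i t = 0 := by
      intro t ht
      exact (Finset.sum_eq_zero_iff.1 h0) t ht
    have : ∑ t ∈ s, ∏ j ∈ u, (c j t) ^ ((u.card : ℝ)⁻¹) = 0 := by
      apply Finset.sum_eq_zero
      intro t ht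
      apply Finset.prod_eq_zero hi
      rw [hc0 t ht, NNReal.zero_rpow (inv_ne_zero hk)]
    simp [this]
  · push_neg at hz
    set S : ι → ℝ≥0 := fun i => ∑ t ∈ s, c i t with hS
    have key : ∑ t ∈ s, ∏ i ∈ u, (c i t / S i) ^ ((u.card : ℝ)⁻¹) ≤ 1 := by
      have step : ∀ t ∈ s, ∏ i ∈ u, (c i t / S i) ^ ((u.card : ℝ)⁻¹)
          ≤ ∑ i ∈ u, (u.card : ℝ≥0)⁻¹ * (c i t / S i) := by
        intro t _
        have := NNReal.geom_mean_le_arith_mean_weighted u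
          (fun _ => (u.card : ℝ≥0)⁻¹) (fun i => c i t / S i)
          (by
            rw [Finset.sum_const, nsmul_eq_mul]
            rw [mul_inv_cancel₀ (Nat.cast_ne_zero.2 hu.card_ne_zero)])
        simpa using this
      calc ∑ t ∈ s, ∏ i ∈ u, (c i t / S i) ^ ((u.card : ℝ)⁻¹)
          ≤ ∑ t ∈ s, ∑ i ∈ u, (u.card : ℝ≥0)⁻¹ * (c i t / S i) :=
            Finset.sum_le_sum step
        _ = ∑ i ∈ u, (u.card : ℝ≥0)⁻¹ * (S i / S i) := by
            rw [Finset.sum_comm]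
            refine Finset.sum_congr rfl fun i _ => ?_
            rw [← Finset.mul_sum, ← Finset.sum_div]
        _ = 1 := by
            rw [Finset.sum_congr rfl fun i hi => by rw [div_self (hz i hi), mul_one]]
            rw [Finset.sum_const, nsmul_eq_mul, mul_inv_cancel₀ (Nat.cast_ne_zero.2 hu.card_ne_zero)]
    have expand : ∀ t, ∏ i ∈ u, (c i t / S i) ^ ((u.card : ℝ)⁻¹)
        = (∏ i ∈ u, (c i t) ^ ((u.card : ℝ)⁻¹)) / ∏ i ∈ u, (S i) ^ ((u.card : ℝ)⁻¹) := by
      intro t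
      rw [← Finset.prod_div_distrib]
      exact Finset.prod_congr rfl fun i _ => NNReal.div_rpow _ _ _
    have hP : (∏ i ∈ u, (S i) ^ ((u.card : ℝ)⁻¹)) ≠ 0 := by
      apply Finset.prod_ne_zero_iff.2
      intro i hi
      simp [NNReal.rpow_eq_zero_iff, hz i hi]
      exact fun h => absurd h (hz i hi)
    rw [show (∑ t ∈ s, ∏ i ∈ u, (c i t / S i) ^ ((u.card : ℝ)⁻¹))
        = (∑ t ∈ s, ∏ i ∈ u, (c i t) ^ ((u.card : ℝ)⁻¹)) / ∏ i ∈ u, (S i) ^ ((u.card : ℝ)⁻¹) by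
      rw [Finset.sum_div]; exact Finset.sum_congr rfl fun t _ => expand t] at key
    exact (div_le_one (zero_lt_iff.2 hP)).1 key

lemma nn_prod_rpow {ι : Type*} (s : Finset ι) (f : ι → ℝ≥0) (r : ℝ) :
    (∏ i ∈ s, f i) ^ r = ∏ i ∈ s, (f i) ^ r := by
  induction s using Finset.cons_induction with
  | empty => simp
  | cons a s ha ih => rw [Finset.prod_cons, Finset.prod_cons, NNReal.mul_rpow, ih]

lemma LW {ι : Type*} [DecidableEq ι] [DecidableEq (ι → ℤ)] (u : Finset ι) :
    ∀ A : Finset (ι → ℤ), A.Nonempty →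
      (A.card : ℝ≥0) ^ (u.card - 1) ≤
        ∏ i ∈ u, ((A.image (fun x => Function.update x i 0)).card : ℝ≥0) := by
  induction u using Finset.induction_on with
  | empty => intro A hA; simp
  | @insert i₀ u hi₀ IH =>
    intro A hA
    rcases Nat.eq_zero_or_pos u.card with hk0 | hkpos
    · -- u = ∅
      have hu : u = ∅ := Finset.card_eq_zero.1 hk0
      subst hu
      rw [Finset.insert_empty, Finset.card_singleton, Nat.sub_self, pow_zero,
        Finset.prod_singleton]
      have : (A.image (fun x => Function.update x i₀ 0)).Nonempty := hA.image _
      exact_mod_cast Nat.one_le_iff_ne_zero.2 (Finset.card_ne_zero.2 this)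
    · set k := u.card with hk
      set g : ι → (ι → ℤ) → (ι → ℤ) := fun i x => Function.update x i 0 with hg
      set T : Finset ℤ := A.image (fun x => x i₀) with hT
      set B : ℤ → Finset (ι → ℤ) := fun t => A.filter (fun x => x i₀ = t) with hB
      have hcardsum : A.card = ∑ t ∈ T, (B t).card :=
        Finset.card_eq_sum_card_fiberwise (fun x hx => Finset.mem_image_of_mem _ hx)
      have hBne : ∀ t ∈ T, (B t).Nonempty := by
        intro t ht
        obtain ⟨x, hx, hxt⟩ := Finset.mem_image.1 ht
        exact ⟨x, Finset.mem_filter.2 ⟨hx, hxt⟩⟩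
      -- projection at i₀ is injective on each slice
      have hBproj : ∀ t, ((B t).image (g i₀)).card = (B t).card := by
        intro t
        apply Finset.card_image_of_injOn
        intro x hx y hy hxy
        funext j
        by_cases hj : j = i₀
        · subst hj
          rw [(Finset.mem_filter.1 hx).2, (Finset.mem_filter.1 hy).2]
        · have := congrFun hxy j
          simpa [hg, Function.update_of_ne hj] using this
      have hπ0 : ∀ t, ((B t).card : ℝ≥0) ≤ ((A.image (g i₀)).card : ℝ≥0) := by
        intro t
        rw [← hBproj t]
        exact_mod_cast Finset.card_le_card
          (Finset.image_subset_image (Finset.filter_subset _ _))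
      -- disjointness of slice projections for i ≠ i₀
      have hdisj : ∀ i ∈ u, ∑ t ∈ T, (((B t).image (g i)).card : ℝ≥0)
          ≤ ((A.image (g i)).card : ℝ≥0) := by
        intro i hi
        have hii₀ : i ≠ i₀ := fun h => hi₀ (h ▸ hi)
        have hd : ∀ t ∈ T, ∀ t' ∈ T, t ≠ t' →
            Disjoint ((B t).image (g i)) ((B t').image (g i)) := by
          intro t _ t' _ htt'
          rw [Finset.disjoint_left]
          rintro z hz hz'
          obtain ⟨x, hx, rfl⟩ := Finset.mem_image.1 hz
          obtain ⟨y, hy, hyz⟩ := Finset.mem_image.1 hz'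
          apply htt'
          have h1 : g i x i₀ = x i₀ := Function.update_of_ne (Ne.symm hii₀) _ _
          have h2 : g i y i₀ = y i₀ := Function.update_of_ne (Ne.symm hii₀) _ _
          rw [← (Finset.mem_filter.1 hx).2, ← (Finset.mem_filter.1 hy).2, ← h1, ← h2, hyz]
        have := Finset.card_biUnion hd
        have hsub : (T.biUnion (fun t => (B t).image (g i))) ⊆ A.image (g i) :=
          Finset.biUnion_subset.2 fun t _ =>
            Finset.image_subset_image (Finset.filter_subset _ _)
        calc ∑ t ∈ T, (((B t).image (g i)).card : ℝ≥0)
            = ((T.biUnion (fun t => (B t).image (g i))).card : ℝ≥0) := by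
              exact_mod_cast (Nat.cast_inj.2 this.symm)
          _ ≤ _ := by exact_mod_cast Finset.card_le_card hsub
      -- per-slice bound raised to power 1/k
      set π₀ : ℝ≥0 := ((A.image (g i₀)).card : ℝ≥0) with hπ₀
      set c : ι → ℤ → ℝ≥0 := fun i t => (((B t).image (g i)).card : ℝ≥0) with hc
      have hslice : ∀ t ∈ T, ((B t).card : ℝ≥0) ^ k ≤ π₀ * ∏ i ∈ u, c i t := by
        intro t ht
        have h1 : ((B t).card : ℝ≥0) ^ k
            = ((B t).card : ℝ≥0) * ((B t).card : ℝ≥0) ^ (k - 1) := by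
          rw [← pow_succ', Nat.sub_add_cancel hkpos]
        rw [h1]
        exact mul_le_mul' (hπ0 t) (IH (B t) (hBne t ht))
      have hkR : ((k : ℝ)) ≠ 0 := Nat.cast_ne_zero.2 hkpos.ne'
      have hslice' : ∀ t ∈ T, ((B t).card : ℝ≥0)
          ≤ (π₀ * ∏ i ∈ u, c i t) ^ ((k : ℝ)⁻¹) := by
        intro t ht
        have := NNReal.rpow_le_rpow (z := (k : ℝ)⁻¹)
          (hslice t ht) (by positivity)
        rwa [← NNReal.rpow_natCast ((B t).card : ℝ≥0) k, ← NNReal.rpow_mul,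
          mul_inv_cancel₀ hkR, NNReal.rpow_one] at this
      have hune : u.Nonempty := Finset.card_pos.1 hkpos
      have main : (A.card : ℝ≥0) ≤ (∏ i ∈ insert i₀ u,
          ((A.image (fun x => Function.update x i 0)).card : ℝ≥0)) ^ ((k : ℝ)⁻¹) := by
        calc (A.card : ℝ≥0) = ∑ t ∈ T, ((B t).card : ℝ≥0) := by exact_mod_cast hcardsum
          _ ≤ ∑ t ∈ T, (π₀ * ∏ i ∈ u, c i t) ^ ((k : ℝ)⁻¹) := Finset.sum_le_sum hslice'
          _ = ∑ t ∈ T, π₀ ^ ((k : ℝ)⁻¹) * ∏ i ∈ u, (c i t) ^ ((k : ℝ)⁻¹) := by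
              refine Finset.sum_congr rfl fun t _ => ?_
              rw [NNReal.mul_rpow, nn_prod_rpow]
          _ = π₀ ^ ((k : ℝ)⁻¹) * ∑ t ∈ T, ∏ i ∈ u, (c i t) ^ ((k : ℝ)⁻¹) := by
              rw [Finset.mul_sum]
          _ ≤ π₀ ^ ((k : ℝ)⁻¹) * ∏ i ∈ u, (∑ t ∈ T, c i t) ^ ((k : ℝ)⁻¹) := by
              exact mul_le_mul_right (by simpa [hk] using holder_eq T u hune c) _
          _ ≤ π₀ ^ ((k : ℝ)⁻¹) * ∏ i ∈ u,
              (((A.image (g i)).card : ℝ≥0)) ^ ((k : ℝ)⁻¹) := by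
              refine mul_le_mul_right (Finset.prod_le_prod' fun i hi =>
                NNReal.rpow_le_rpow (hdisj i hi) (by positivity)) _
          _ = (∏ i ∈ insert i₀ u,
              ((A.image (fun x => Function.update x i 0)).card : ℝ≥0)) ^ ((k : ℝ)⁻¹) := by
              rw [Finset.prod_insert hi₀, NNReal.mul_rpow, nn_prod_rpow]
      have hfin := NNReal.rpow_le_rpow (z := (k : ℝ)) main (by positivity)
      rw [← NNReal.rpow_mul, inv_mul_cancel₀ hkR, NNReal.rpow_one] at hfin
      have : (insert i₀ u).card - 1 = k := by
        rw [Finset.card_insert_of_notMem hi₀]; omega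
      rw [this]
      calc (A.card : ℝ≥0) ^ k = ((A.card : ℝ≥0)) ^ ((k : ℝ)) := by
            rw [NNReal.rpow_natCast]
        _ ≤ _ := hfin

open Classical in
lemma proj_le_boundary (d : ℕ) (Λ : Finset (Fin d → ℤ)) (i : Fin d) :
    (Λ.image (fun x => Function.update x i 0)).card ≤
      (Λ.filter (fun x => ∃ y, y ∉ Λ ∧ (∑ j, |x j - y j|) = 1)).card := by
  classical
  set F : (Fin d → ℤ) → Finset (Fin d → ℤ) :=
    fun z => Λ.filter (fun x => Function.update x i 0 = z) with hF
  have hFmax : ∀ z ∈ Λ.image (fun x => Function.update x i 0),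
      ∃ x, x ∈ F z ∧ ∀ w ∈ F z, w i ≤ x i := by
    intro z hz
    obtain ⟨x, hx, hxz⟩ := Finset.mem_image.1 hz
    have hne : (F z).Nonempty := ⟨x, Finset.mem_filter.2 ⟨hx, hxz⟩⟩
    obtain ⟨b, hb, hball⟩ := Finset.exists_max_image (F z) (fun w => w i) hne
    exact ⟨b, hb, hball⟩
  set f : (Fin d → ℤ) → (Fin d → ℤ) := fun z =>
    if h : ∃ x, x ∈ F z ∧ ∀ w ∈ F z, w i ≤ x i then h.choose else z with hf
  have hfz : ∀ z ∈ Λ.image (fun x => Function.update x i 0),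
      f z ∈ F z ∧ ∀ w ∈ F z, w i ≤ f z i := by
    intro z hz
    have h := hFmax z hz
    simp only [hf, dif_pos h]
    exact h.choose_spec
  apply Finset.card_le_card_of_injOn f
  · intro z hz
    obtain ⟨hmem, hmax⟩ := hfz z hz
    have hfΛ : f z ∈ Λ := (Finset.mem_filter.1 hmem).1
    have hfzz : Function.update (f z) i 0 = z := (Finset.mem_filter.1 hmem).2
    refine Finset.mem_filter.2 ⟨hfΛ, ⟨Function.update (f z) i (f z i + 1), ?_, ?_⟩⟩
    · intro hy
      have hyF : Function.update (f z) i (f z i + 1) ∈ F z := by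
        refine Finset.mem_filter.2 ⟨hy, ?_⟩
        rw [Function.update_idem]
        exact hfzz
      have := hmax _ hyF
      simp [Function.update_self] at this
    · rw [Fintype.sum_eq_single i (fun j hj => by
        simp [Function.update_of_ne hj])]
      simp [Function.update_self]
  · intro z hz z' hz' hzz'
    rw [← (Finset.mem_filter.1 (hfz z hz).1).2, ← (Finset.mem_filter.1 (hfz z' hz').1).2, hzz']

/-- Isoperimetric inequality on `ℤ^d`: for every nonempty finite `Λ ⊂ ℤ^d`, the inner
vertex boundary `∂_in Λ = {x ∈ Λ : ∃ y ∉ Λ, |x − y|₁ = 1}` satisfies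
`|Λ|^{1 − 1/d} ≤ |∂_in Λ|`. -/
theorem stmt3 (d : ℕ) (hd : 1 ≤ d) (Λ : Finset (Fin d → ℤ)) (hΛ : Λ.Nonempty) :
    (Λ.card : ℝ) ^ ((1 : ℝ) - 1 / (d : ℝ)) ≤
      ({x | x ∈ Λ ∧ ∃ y, y ∉ Λ ∧ (∑ i, |x i - y i|) = 1} : Set (Fin d → ℤ)).ncard := by
  classical
  set B : Finset (Fin d → ℤ) :=
    Λ.filter (fun x => ∃ y, y ∉ Λ ∧ (∑ j, |x j - y j|) = 1) with hBdef
  have hset : ({x | x ∈ Λ ∧ ∃ y, y ∉ Λ ∧ (∑ i, |x i - y i|) = 1} : Set (Fin d → ℤ)) = ↑B := by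
    ext x; simp [hBdef]
  rw [hset, Set.ncard_coe_finset]
  -- Loomis-Whitney
  have hLW := LW (ι := Fin d) Finset.univ Λ hΛ
  rw [Finset.card_univ, Fintype.card_fin] at hLW
  have hproj : ∀ i : Fin d, ((Λ.image (fun x => Function.update x i 0)).card : ℝ≥0)
      ≤ (B.card : ℝ≥0) := by
    intro i
    exact_mod_cast proj_le_boundary d Λ i
  have hkey : ((Λ.card : ℝ≥0)) ^ (d - 1) ≤ (B.card : ℝ≥0) ^ d := by
    calc ((Λ.card : ℝ≥0)) ^ (d - 1)
        ≤ ∏ i : Fin d, ((Λ.image (fun x => Function.update x i 0)).card : ℝ≥0) := hLW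
      _ ≤ ∏ _i : Fin d, (B.card : ℝ≥0) := Finset.prod_le_prod' fun i _ => hproj i
      _ = (B.card : ℝ≥0) ^ d := by rw [Finset.prod_const, Finset.card_univ, Fintype.card_fin]
  have hkeyR : ((Λ.card : ℝ)) ^ ((d : ℝ) - 1) ≤ ((B.card : ℝ)) ^ ((d : ℝ)) := by
    have h1 : ((Λ.card : ℝ)) ^ (((d - 1 : ℕ)) : ℝ) ≤ ((B.card : ℝ)) ^ (((d : ℕ)) : ℝ) := by
      rw [Real.rpow_natCast, Real.rpow_natCast]
      exact_mod_cast hkey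
    rwa [Nat.cast_sub hd, Nat.cast_one] at h1
  have hdpos : (0 : ℝ) < d := by exact_mod_cast hd
  have h2 := Real.rpow_le_rpow (by positivity) hkeyR (le_of_lt (by positivity : (0:ℝ) < (d:ℝ)⁻¹))
  rw [← Real.rpow_mul (by positivity), ← Real.rpow_mul (by positivity),
    mul_inv_cancel₀ hdpos.ne', Real.rpow_one] at h2
  have hexp : ((d : ℝ) - 1) * (d : ℝ)⁻¹ = (1 : ℝ) - 1 / (d : ℝ) := by
    field_simp
  rwa [hexp] at h2
end

section
/- Admissibility dichotomy bound (Lemma 3.14 analogue): let C and C' be two adjacent cubes in ℤ^d of side length 2^l sharing exactly one face, and A ⊆ ℤ^d a set with |C ∩ A| ≥ |C|/2 and |C' ∩ A| < |C'|/2. Then the exterior boundary of A restricted to U = C ∪ C' satisfies 2^{l(d−1)} ≤ b |∂_ex A ∩ U| for a constant b = b(d) ≥ 1. -/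
open Finset

variable {d : ℕ}

noncomputable def boxF (a : Fin d → ℤ) (n : Fin d → ℕ) : Finset (Fin d → ℤ) :=
  Fintype.piFinset fun i => Finset.Ico (a i) (a i + n i)

lemma mem_boxF {a : Fin d → ℤ} {n : Fin d → ℕ} {y : Fin d → ℤ} :
    y ∈ boxF a n ↔ ∀ i, a i ≤ y i ∧ y i < a i + n i := by
  simp [boxF, Fintype.mem_piFinset, Finset.mem_Ico]

lemma card_boxF (a : Fin d → ℤ) (n : Fin d → ℕ) : (boxF a n).card = ∏ i, n i := by
  rw [boxF, Fintype.card_piFinset]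
  congr 1; funext i
  rw [Int.card_Ico]
  simp

def bdF (S B : Finset (Fin d → ℤ)) : Finset (Fin d → ℤ) :=
  B.filter fun v => v ∉ S ∧ ∃ w ∈ S, (∑ i, |v i - w i|) = 1

lemma mem_bdF {S B : Finset (Fin d → ℤ)} {v : Fin d → ℤ} :
    v ∈ bdF S B ↔ v ∈ B ∧ v ∉ S ∧ ∃ w ∈ S, (∑ i, |v i - w i|) = 1 := by
  simp [bdF, Finset.mem_filter]

lemma fiber_sum_le (i : Fin d) (c : ℤ) (F : Finset ℕ) (B : Finset (Fin d → ℤ)) :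
    ∑ t ∈ F, (B.filter fun y => y i = c + t).card ≤ B.card := by
  classical
  rw [← Finset.card_biUnion]
  · exact Finset.card_le_card (Finset.biUnion_subset.2 fun t _ => Finset.filter_subset _ _)
  · intro t₁ h₁ t₂ h₂ hne
    simp only [Finset.disjoint_left, Finset.mem_filter]
    rintro y ⟨-, hy1⟩ ⟨-, hy2⟩
    rw [hy1] at hy2
    exact hne (by exact_mod_cast add_left_cancel hy2)

lemma arith_half (n₁ N : ℕ) (hn₁ : 1 ≤ n₁) (hnN : n₁ ≤ N) (q : ℝ) (G : ℕ → ℝ)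
    (hG0 : ∀ t < n₁, 0 ≤ G t) (hGq : ∀ t < n₁, G t ≤ q) (M μ : ℝ)
    (hM : ∀ t < n₁, G t ≤ M) (hμ : ∀ t < n₁, μ ≤ G t)
    (hsum : ∑ t ∈ range n₁, G t ≤ ∑ t ∈ range n₁, (q - G t)) :
    ∑ t ∈ range n₁, G t ≤
      2 * N * (M - μ) + 2 * ∑ t ∈ range n₁, min (G t) (q - G t) := by
  have hMμ : μ ≤ M := le_trans (hμ 0 hn₁) (hM 0 hn₁)
  have hμq : μ ≤ q / 2 := by
    have h1 : (n₁ : ℝ) * μ ≤ ∑ t ∈ range n₁, G t := by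
      calc (n₁ : ℝ) * μ = ∑ _t ∈ range n₁, μ := by simp [mul_comm]
      _ ≤ _ := Finset.sum_le_sum fun t ht => hμ t (Finset.mem_range.1 ht)
    have h2 : ∑ t ∈ range n₁, (q - G t) = (n₁ : ℝ) * q - ∑ t ∈ range n₁, G t := by
      rw [Finset.sum_sub_distrib]; simp [mul_comm]
    have hn₁' : (1 : ℝ) ≤ (n₁ : ℝ) := by exact_mod_cast hn₁
    nlinarith [hsum]
  have key : ∀ t < n₁, G t ≤ 2 * (M - μ) + 2 * min (G t) (q - G t) := by
    intro t ht
    rcases le_or_gt (G t) (q / 2) with h | h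
    · rw [min_eq_left (by linarith)]
      have := hG0 t ht; linarith
    · rw [min_eq_right (by linarith)]
      have := hM t ht; have := hGq t ht; linarith
  calc ∑ t ∈ range n₁, G t
      ≤ ∑ t ∈ range n₁, (2 * (M - μ) + 2 * min (G t) (q - G t)) :=
        Finset.sum_le_sum fun t ht => key t (Finset.mem_range.1 ht)
    _ = (n₁ : ℝ) * (2 * (M - μ)) + 2 * ∑ t ∈ range n₁, min (G t) (q - G t) := by
        rw [Finset.sum_add_distrib, Finset.sum_const, card_range, nsmul_eq_mul, ← Finset.mul_sum]
    _ ≤ 2 * N * (M - μ) + 2 * ∑ t ∈ range n₁, min (G t) (q - G t) := by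
        have hnN' : (n₁ : ℝ) ≤ (N : ℝ) := by exact_mod_cast hnN
        nlinarith [hMμ]

lemma arith_main (n₁ N : ℕ) (hn₁ : 1 ≤ n₁) (hnN : n₁ ≤ N) (q : ℝ) (G : ℕ → ℝ)
    (hG0 : ∀ t < n₁, 0 ≤ G t) (hGq : ∀ t < n₁, G t ≤ q) (M μ : ℝ)
    (hM : ∀ t < n₁, G t ≤ M) (hμ : ∀ t < n₁, μ ≤ G t) :
    min (∑ t ∈ range n₁, G t) (∑ t ∈ range n₁, (q - G t)) ≤
      2 * N * (M - μ) + 2 * ∑ t ∈ range n₁, min (G t) (q - G t) := by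
  rcases le_total (∑ t ∈ range n₁, G t) (∑ t ∈ range n₁, (q - G t)) with h | h
  · rw [min_eq_left h]
    exact arith_half n₁ N hn₁ hnN q G hG0 hGq M μ hM hμ h
  · rw [min_eq_right h]
    have := arith_half n₁ N hn₁ hnN q (fun t => q - G t)
      (fun t ht => by have := hGq t ht; simpa using this)
      (fun t ht => by have := hG0 t ht; simp; linarith)
      (q - μ) (q - M)
      (fun t ht => by have := hμ t ht; simp; linarith)
      (fun t ht => by have := hM t ht; simp; linarith)
      (by simpa using h)
    have e1 : (q - μ) - (q - M) = M - μ := by ring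
    calc ∑ t ∈ range n₁, (q - G t)
        ≤ 2 * N * ((q - μ) - (q - M)) + 2 * ∑ t ∈ range n₁, min (q - G t) (q - (q - G t)) :=
          this
      _ = 2 * N * (M - μ) + 2 * ∑ t ∈ range n₁, min (G t) (q - G t) := by
          rw [e1]; congr 1; congr 1
          apply Finset.sum_congr rfl; intro t _
          rw [min_comm]; congr 1 <;> ring

lemma shift_bound (a : Fin d → ℤ) (n : Fin d → ℕ) (S : Finset (Fin d → ℤ))
    (hS : S ⊆ boxF a n) (i : Fin d) (t t' : ℕ) (ht' : t' < n i)
    (ε : ℤ) (hε : |ε| = 1) (htt' : (t' : ℤ) = (t : ℤ) + ε) :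
    ((S.filter fun y => y i = a i + t).card : ℝ) - ((S.filter fun y => y i = a i + t').card : ℝ)
      ≤ (((bdF S (boxF a n)).filter fun y => y i = a i + t').card : ℝ) := by
  classical
  set T := S.filter fun y => y i = a i + (t : ℤ) with hT
  set σ : (Fin d → ℤ) → (Fin d → ℤ) := fun y => Function.update y i (y i + ε) with hσ
  have hinj : Function.Injective σ := by
    intro y y' h
    funext k
    by_cases hk : k = i
    · subst hk
      have h1 := congrFun h k
      simp only [hσ, Function.update_self] at h1
      linarith
    · have h1 := congrFun h k
      simpa [hσ, Function.update_of_ne hk] using h1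
  have himg : ∀ v ∈ T.image σ, v i = a i + t' ∧ ∃ w ∈ S, w i = a i + t ∧ v = σ w := by
    intro v hv
    obtain ⟨w, hw, rfl⟩ := Finset.mem_image.1 hv
    rw [hT, Finset.mem_filter] at hw
    refine ⟨?_, w, hw.1, hw.2, rfl⟩
    simp only [hσ, Function.update_self]
    rw [hw.2, htt']; ring
  have hsub : (T.image σ) \ S ⊆ (bdF S (boxF a n)).filter fun y => y i = a i + t' := by
    intro v hv
    rw [Finset.mem_sdiff] at hv
    obtain ⟨hvi, w, hwS, hwi, rfl⟩ := himg v hv.1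
    have hwbox := mem_boxF.1 (hS hwS)
    rw [Finset.mem_filter, mem_bdF]
    refine ⟨⟨?_, hv.2, w, hwS, ?_⟩, hvi⟩
    · rw [mem_boxF]
      intro k
      by_cases hk : k = i
      · subst hk
        rw [hvi]
        constructor
        · omega
        · have : (t' : ℤ) < n k := by exact_mod_cast ht'
          linarith
      · simp only [hσ, Function.update_of_ne hk]
        exact hwbox k
    · rw [Finset.sum_eq_single_of_mem i (Finset.mem_univ i)]
      · simp [hσ, Function.update_self, hε]
      · intro k _ hk
        simp [hσ, Function.update_of_ne hk]
  have hint : (T.image σ) ∩ S ⊆ S.filter fun y => y i = a i + t' := by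
    intro v hv
    rw [Finset.mem_inter] at hv
    exact Finset.mem_filter.2 ⟨hv.2, (himg v hv.1).1⟩
  have hcards : ((T.image σ) ∩ S).card + ((T.image σ) \ S).card = T.card := by
    rw [Finset.card_inter_add_card_sdiff, Finset.card_image_of_injective _ hinj]
  have h1 : ((T.image σ) ∩ S).card ≤ (S.filter fun y => y i = a i + t').card :=
    Finset.card_le_card hint
  have h2 : ((T.image σ) \ S).card ≤ ((bdF S (boxF a n)).filter fun y => y i = a i + t').card :=
    Finset.card_le_card hsub
  have h1' : (((T.image σ) ∩ S).card : ℝ) ≤ ((S.filter fun y => y i = a i + (t' : ℤ)).card : ℝ) := by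
    exact_mod_cast h1
  have h2' : (((T.image σ) \ S).card : ℝ) ≤ (((bdF S (boxF a n)).filter fun y => y i = a i + (t' : ℤ)).card : ℝ) := by
    exact_mod_cast h2
  have hc' : (((T.image σ) ∩ S).card : ℝ) + (((T.image σ) \ S).card : ℝ) = (T.card : ℝ) := by
    exact_mod_cast hcards
  linarith

lemma key (N : ℕ) (D : Finset (Fin d)) :
    ∀ (a : Fin d → ℤ) (n : Fin d → ℕ), (∀ i, n i ≤ N) → (∀ i ∉ D, n i = 1) →
    ∀ S : Finset (Fin d → ℤ), S ⊆ boxF a n →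
      min (S.card : ℝ) (((boxF a n).card : ℝ) - S.card) ≤
        4 ^ D.card * N * ((bdF S (boxF a n)).card : ℝ) := by
  classical
  induction D using Finset.cons_induction with
  | empty =>
    intro a n hn hD S hS
    have hcard : (boxF a n).card = 1 := by
      rw [card_boxF]
      exact Finset.prod_eq_one fun i _ => hD i (Finset.notMem_empty i)
    have hS1 : S.card ≤ 1 := hcard ▸ Finset.card_le_card hS
    have hrhs : (0:ℝ) ≤ 4 ^ (∅ : Finset (Fin d)).card * N * ((bdF S (boxF a n)).card : ℝ) := by
      positivity
    rcases Nat.le_one_iff_eq_zero_or_eq_one.1 hS1 with h | h <;>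
      · rw [h, hcard]
        simpa using hrhs
  | cons i D' hi IH =>
    intro a n hn hD S hS
    by_cases hni0 : n i = 0
    · have hB0 : (boxF a n).card = 0 := by
        rw [card_boxF]; exact Finset.prod_eq_zero (Finset.mem_univ i) hni0
      have hS0 : S.card = 0 := Nat.le_zero.1 (hB0 ▸ Finset.card_le_card hS)
      rw [hS0, hB0]
      have : (0:ℝ) ≤ 4 ^ (Finset.cons i D' hi).card * N * ((bdF S (boxF a n)).card : ℝ) := by
        positivity
      simpa using this
    · have hni : 1 ≤ n i := Nat.one_le_iff_ne_zero.2 hni0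
      have hN1 : 1 ≤ N := le_trans hni (hn i)
      set B := boxF a n with hB
      set g : ℕ → ℕ := fun t => (S.filter fun y => y i = a i + (t:ℤ)).card with hg
      set q : ℕ := ∏ k ∈ Finset.univ.erase i, n k with hq
      set bd : ℕ := (bdF S B).card with hbd
      set h : ℕ → ℕ := fun t => ((bdF S B).filter fun y => y i = a i + (t:ℤ)).card with hh
      -- (A) box card
      have hBcard : B.card = n i * q := by
        rw [hB, card_boxF, hq, ← Finset.mul_prod_erase Finset.univ n (Finset.mem_univ i)]
      -- (B) S card fiberwise
      have hScard : S.card = ∑ t ∈ Finset.range (n i), g t := by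
        have hmap : ∀ y ∈ S, (y i - a i).toNat ∈ Finset.range (n i) := by
          intro y hy
          have hybox := (mem_boxF.1 (hS hy)) i
          rw [Finset.mem_range]
          omega
        rw [Finset.card_eq_sum_card_fiberwise hmap]
        apply Finset.sum_congr rfl
        intro t ht
        simp only [hg]
        congr 1
        apply Finset.filter_congr
        intro y hy
        have hybox := (mem_boxF.1 (hS hy)) i
        constructor <;> intro hyy <;> omega
      -- slices
      set a' : ℕ → (Fin d → ℤ) := fun t => Function.update a i (a i + (t:ℤ)) with ha'
      set n' : Fin d → ℕ := Function.update n i 1 with hn'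
      have hslice_mem : ∀ t < n i, ∀ y : Fin d → ℤ,
          (y ∈ boxF (a' t) n' ↔ y ∈ B ∧ y i = a i + (t:ℤ)) := by
        intro t ht y
        rw [mem_boxF, hB, mem_boxF]
        simp only [ha', hn']
        constructor
        · intro hy
          have hyi := hy i
          simp only [Function.update_self] at hyi
          refine ⟨fun k => ?_, by push_cast at hyi ⊢; omega⟩
          by_cases hk : k = i
          · subst hk
            push_cast at hyi ⊢
            omega
          · have := hy k
            simpa [Function.update_of_ne hk] using this
        · rintro ⟨hy, hyi⟩ k
          by_cases hk : k = i
          · subst hk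
            simp only [Function.update_self]
            push_cast
            have := hy k
            omega
          · simp only [Function.update_of_ne hk]
            exact hy k
      have hslice_card : ∀ t : ℕ, (boxF (a' t) n').card = q := by
        intro t
        rw [card_boxF, hn', hq]
        rw [Finset.prod_update_of_mem (Finset.mem_univ i), one_mul, ← Finset.erase_eq]
      set St : ℕ → Finset (Fin d → ℤ) := fun t => S.filter fun y => y i = a i + (t:ℤ) with hSt
      have hStsub : ∀ t < n i, St t ⊆ boxF (a' t) n' := by
        intro t ht y hy
        rw [hSt, Finset.mem_filter] at hy
        exact ((hslice_mem t ht y).2 ⟨hS hy.1, hy.2⟩)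
      have hgq : ∀ t < n i, g t ≤ q := by
        intro t ht
        rw [hg]
        calc (St t).card ≤ (boxF (a' t) n').card := Finset.card_le_card (hStsub t ht)
          _ = q := hslice_card t
      -- (C6) slice boundary embeds
      have hbdsub : ∀ t < n i, (bdF (St t) (boxF (a' t) n')).card ≤ h t := by
        intro t ht
        rw [hh]
        apply Finset.card_le_card
        intro v hv
        rw [mem_bdF] at hv
        obtain ⟨hvbox, hvS, w, hwS, hwadj⟩ := hv
        obtain ⟨hvB, hvi⟩ := (hslice_mem t ht v).1 hvbox
        rw [Finset.mem_filter, mem_bdF]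
        refine ⟨⟨hvB, ?_, w, ?_, hwadj⟩, hvi⟩
        · intro hvS'
          exact hvS (Finset.mem_filter.2 ⟨hvS', hvi⟩)
        · exact Finset.mem_filter.1 hwS |>.1
      -- (D) fiber sums of boundary
      have hfiber : ∀ F : Finset ℕ, ∑ t ∈ F, h t ≤ bd := by
        intro F
        rw [hbd, hh]
        exact fiber_sum_le i (a i) F (bdF S B)
      -- (E) max and min slices
      obtain ⟨p, hp, hpmax⟩ := Finset.exists_max_image (Finset.range (n i)) g
        ⟨0, Finset.mem_range.2 hni⟩
      obtain ⟨r, hr, hrmin⟩ := Finset.exists_min_image (Finset.range (n i)) g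
        ⟨0, Finset.mem_range.2 hni⟩
      rw [Finset.mem_range] at hp hr
      -- (F) M - μ ≤ bd
      have hMμ : (g p : ℝ) - g r ≤ (bd : ℝ) := by
        rcases lt_trichotomy p r with hpr | hpr | hpr
        · -- p < r : shift up
          have hstep : ∀ t ∈ Finset.Ico p r, (g t : ℝ) - g (t+1) ≤ (h (t+1) : ℝ) := by
            intro t ht
            rw [Finset.mem_Ico] at ht
            have ht1 : t + 1 < n i := by omega
            have := shift_bound a n S hS i t (t+1) ht1 1 (by norm_num) (by push_cast; ring)
            rw [hg, hh]
            exact_mod_cast this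
          have htel : ∑ t ∈ Finset.Ico p r, ((g t : ℝ) - g (t+1)) = (g p : ℝ) - g r := by
            rw [Finset.sum_Ico_eq_sum_range]
            have h2 := Finset.sum_range_sub' (f := fun k => (g (p + k) : ℝ)) (n := r - p)
            rw [show p + (r - p) = r from by omega] at h2
            calc ∑ k ∈ Finset.range (r - p), ((g (p + k) : ℝ) - g (p + k + 1))
                = ∑ k ∈ Finset.range (r - p), ((g (p + k) : ℝ) - g (p + (k + 1))) := by
                  apply Finset.sum_congr rfl
                  intro k _
                  rfl
              _ = (g (p + 0) : ℝ) - g r := h2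
              _ = (g p : ℝ) - g r := by norm_num
          have hsum2 : ∑ t ∈ Finset.Ico p r, (h (t+1) : ℝ) ≤ (bd : ℝ) := by
            have : ∑ t ∈ Finset.Ico p r, h (t+1) ≤ bd := by
              calc ∑ t ∈ Finset.Ico p r, h (t+1)
                  = ∑ s ∈ (Finset.Ico p r).image (· + 1), h s := by
                    rw [Finset.sum_image]
                    intro x _ y _ hxy
                    simp only at hxy; omega
                _ ≤ bd := hfiber _
            exact_mod_cast this
          calc (g p : ℝ) - g r = ∑ t ∈ Finset.Ico p r, ((g t : ℝ) - g (t+1)) := htel.symm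
            _ ≤ ∑ t ∈ Finset.Ico p r, (h (t+1) : ℝ) := Finset.sum_le_sum hstep
            _ ≤ (bd : ℝ) := hsum2
        · rw [hpr]; simp [Nat.cast_nonneg]
        · -- r < p : shift down
          have hstep : ∀ t ∈ Finset.Ico r p, (g (t+1) : ℝ) - g t ≤ (h t : ℝ) := by
            intro t ht
            rw [Finset.mem_Ico] at ht
            have ht0 : t < n i := by omega
            have := shift_bound a n S hS i (t+1) t ht0 (-1) (by norm_num) (by push_cast; ring)
            rw [hg, hh]
            exact_mod_cast this
          have htel : ∑ t ∈ Finset.Ico r p, ((g (t+1) : ℝ) - g t) = (g p : ℝ) - g r := by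
            rw [Finset.sum_Ico_eq_sum_range]
            have h2 := Finset.sum_range_sub (f := fun k => (g (r + k) : ℝ)) (n := p - r)
            rw [show r + (p - r) = p from by omega] at h2
            calc ∑ k ∈ Finset.range (p - r), ((g (r + k + 1) : ℝ) - g (r + k))
                = ∑ k ∈ Finset.range (p - r), ((g (r + (k + 1)) : ℝ) - g (r + k)) := by
                  apply Finset.sum_congr rfl
                  intro k _
                  rfl
              _ = (g p : ℝ) - g (r + 0) := h2
              _ = (g p : ℝ) - g r := by norm_num
          have hsum2 : ∑ t ∈ Finset.Ico r p, (h t : ℝ) ≤ (bd : ℝ) := by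
            exact_mod_cast hfiber _
          calc (g p : ℝ) - g r = ∑ t ∈ Finset.Ico r p, ((g (t+1) : ℝ) - g t) := htel.symm
            _ ≤ ∑ t ∈ Finset.Ico r p, (h t : ℝ) := Finset.sum_le_sum hstep
            _ ≤ (bd : ℝ) := hsum2
      -- (C5) IH per slice
      have hIH : ∀ t < n i, min ((g t : ℝ)) ((q : ℝ) - g t) ≤
          4 ^ D'.card * N * ((bdF (St t) (boxF (a' t) n')).card : ℝ) := by
        intro t ht
        have hn'le : ∀ k, n' k ≤ N := by
          intro k
          by_cases hk : k = i
          · subst hk; rw [hn']; simp [hN1]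
          · rw [hn', Function.update_of_ne hk]; exact hn k
        have hD' : ∀ k, k ∉ D' → n' k = 1 := by
          intro k hk
          by_cases hki : k = i
          · subst hki; rw [hn']; simp
          · rw [hn', Function.update_of_ne hki]
            exact hD k (by simp [Finset.mem_cons, hki, hk])
        have := IH (a' t) n' hn'le hD' (St t) (hStsub t ht)
        rw [hslice_card t] at this
        rw [hg]
        convert this using 2
      -- (G) put together with arith_main
      have harith := arith_main (n i) N hni (hn i) (q : ℝ) (fun t => (g t : ℝ))
        (fun t _ => Nat.cast_nonneg _)
        (fun t ht => by show (g t : ℝ) ≤ (q : ℝ); exact_mod_cast hgq t ht)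
        (g p : ℝ) (g r : ℝ)
        (fun t ht => by show (g t : ℝ) ≤ (g p : ℝ); exact_mod_cast hpmax t (Finset.mem_range.2 ht))
        (fun t ht => by show (g r : ℝ) ≤ (g t : ℝ); exact_mod_cast hrmin t (Finset.mem_range.2 ht))
      have hLHS : min (S.card : ℝ) ((B.card : ℝ) - S.card) =
          min (∑ t ∈ Finset.range (n i), (g t : ℝ))
            (∑ t ∈ Finset.range (n i), ((q : ℝ) - g t)) := by
        have h1 : (S.card : ℝ) = ∑ t ∈ Finset.range (n i), (g t : ℝ) := by
          rw [hScard]; push_cast; ring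
        have h2 : (B.card : ℝ) - S.card = ∑ t ∈ Finset.range (n i), ((q : ℝ) - g t) := by
          rw [Finset.sum_sub_distrib, Finset.sum_const, Finset.card_range, hBcard, h1]
          push_cast; ring
        rw [h2, h1]
      have hsummin : ∑ t ∈ Finset.range (n i), min ((g t : ℝ)) ((q : ℝ) - g t) ≤
          4 ^ D'.card * N * (bd : ℝ) := by
        calc ∑ t ∈ Finset.range (n i), min ((g t : ℝ)) ((q : ℝ) - g t)
            ≤ ∑ t ∈ Finset.range (n i),
              (4 ^ D'.card * N * ((bdF (St t) (boxF (a' t) n')).card : ℝ)) :=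
              Finset.sum_le_sum fun t ht => hIH t (Finset.mem_range.1 ht)
          _ ≤ ∑ t ∈ Finset.range (n i), (4 ^ D'.card * N * (h t : ℝ)) := by
              apply Finset.sum_le_sum
              intro t ht
              have := hbdsub t (Finset.mem_range.1 ht)
              have h4 : (0:ℝ) ≤ 4 ^ D'.card * N := by positivity
              have : ((bdF (St t) (boxF (a' t) n')).card : ℝ) ≤ (h t : ℝ) := by exact_mod_cast this
              nlinarith
          _ = 4 ^ D'.card * N * ∑ t ∈ Finset.range (n i), (h t : ℝ) := by
              rw [Finset.mul_sum]
          _ ≤ 4 ^ D'.card * N * (bd : ℝ) := by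
              have h4 : (0:ℝ) ≤ 4 ^ D'.card * (N:ℝ) := by positivity
              have hfs : ∑ t ∈ Finset.range (n i), (h t : ℝ) ≤ (bd : ℝ) := by
                exact_mod_cast hfiber (Finset.range (n i))
              nlinarith
      rw [hLHS]
      have hbd0 : (0:ℝ) ≤ (bd : ℝ) := Nat.cast_nonneg _
      have hN0 : (0:ℝ) ≤ (N : ℝ) := Nat.cast_nonneg _
      have hcc : (Finset.cons i D' hi).card = D'.card + 1 := Finset.card_cons hi
      calc min (∑ t ∈ Finset.range (n i), (g t : ℝ))
            (∑ t ∈ Finset.range (n i), ((q : ℝ) - g t))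
          ≤ 2 * N * ((g p : ℝ) - g r) +
            2 * ∑ t ∈ Finset.range (n i), min ((g t : ℝ)) ((q : ℝ) - g t) := harith
        _ ≤ 2 * N * (bd : ℝ) + 2 * (4 ^ D'.card * N * (bd : ℝ)) := by
            have h2N : (0:ℝ) ≤ 2 * N := by positivity
            nlinarith [hMμ, hsummin]
        _ ≤ 4 ^ (Finset.cons i D' hi).card * N * (bd : ℝ) := by
            rw [hcc, pow_succ]
            have h1 : (1:ℝ) ≤ 4 ^ D'.card := one_le_pow₀ (by norm_num)
            have hnb : (0:ℝ) ≤ (N:ℝ) * bd := mul_nonneg hN0 hbd0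
            nlinarith [mul_nonneg (sub_nonneg.2 h1) hnb]


/-- Admissibility dichotomy bound: there is a constant `b = b(d) ≥ 1` such that for any
two adjacent cubes `C, C'` of side `2^l` in `ℤ^d` sharing exactly one face (`C'` being the
translate of `C` by `2^l` in some direction `j`), and any `A ⊆ ℤ^d` with
`|C ∩ A| ≥ |C|/2` and `|C' ∩ A| < |C'|/2`, one has
`2^{l(d−1)} ≤ b |∂_ex A ∩ (C ∪ C')|`. -/
theorem stmt18 (d : ℕ) (hd : 1 ≤ d) :
    ∃ b : ℝ, 1 ≤ b ∧
      ∀ (l : ℕ) (u : Fin d → ℤ) (j : Fin d) (A : Set (Fin d → ℤ)),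
        ((2 : ℝ) ^ (l * d) ≤
            2 * (({y : Fin d → ℤ | ∀ i, u i ≤ y i ∧ y i < u i + 2 ^ l} ∩ A).ncard : ℝ)) →
        (2 * (({y : Fin d → ℤ |
              ∀ i, u i + (if i = j then 2 ^ l else 0) ≤ y i ∧
                y i < u i + (if i = j then 2 ^ l else 0) + 2 ^ l} ∩ A).ncard : ℝ)
            < (2 : ℝ) ^ (l * d)) →
        (2 : ℝ) ^ (l * (d - 1)) ≤
          b * ((({v : Fin d → ℤ | v ∉ A ∧ ∃ w ∈ A, (∑ i, |v i - w i|) = 1} ∩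
              ({y | ∀ i, u i ≤ y i ∧ y i < u i + 2 ^ l} ∪
               {y | ∀ i, u i + (if i = j then 2 ^ l else 0) ≤ y i ∧
                  y i < u i + (if i = j then 2 ^ l else 0) + 2 ^ l})).ncard : ℝ)) := by
  classical
  refine ⟨4 ^ (d + 2), one_le_pow₀ (by norm_num), ?_⟩
  intro l u j A h1 h2
  set nC : Fin d → ℕ := fun _ => 2 ^ l with hnC
  set u' : Fin d → ℤ := fun i => u i + if i = j then 2 ^ l else 0 with hu'
  set nU : Fin d → ℕ := fun i => if i = j then 2 ^ l + 2 ^ l else 2 ^ l with hnU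
  -- set identifications
  have hCset : {y : Fin d → ℤ | ∀ i, u i ≤ y i ∧ y i < u i + 2 ^ l} = ↑(boxF u nC) := by
    ext y
    rw [Finset.mem_coe, mem_boxF]
    simp only [Set.mem_setOf_eq, hnC]
    push_cast
    rfl
  have hC'set : {y : Fin d → ℤ |
      ∀ i, u i + (if i = j then 2 ^ l else 0) ≤ y i ∧
        y i < u i + (if i = j then 2 ^ l else 0) + 2 ^ l} = ↑(boxF u' nC) := by
    ext y
    rw [Finset.mem_coe, mem_boxF]
    simp only [Set.mem_setOf_eq, hnC, hu']
    push_cast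
    rfl
  have hpow : ∀ i : Fin d, (↑(nU i) : ℤ) = (if i = j then (2:ℤ)^l else 0) + 2 ^ l := by
    intro i
    rw [hnU]
    by_cases hij : i = j <;> simp [hij] <;> push_cast <;> ring
  have hP0 : (0:ℤ) < 2 ^ l := by positivity
  have hmemU : ∀ y : Fin d → ℤ, y ∈ boxF u nU ↔
      ∀ i, u i ≤ y i ∧ y i < u i + ((if i = j then (2:ℤ)^l else 0) + 2^l) := by
    intro y
    rw [mem_boxF]
    apply forall_congr'
    intro i
    rw [hpow i]
  have hmemC : ∀ y : Fin d → ℤ, y ∈ boxF u nC ↔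
      ∀ i, u i ≤ y i ∧ y i < u i + (2:ℤ)^l := by
    intro y
    rw [mem_boxF]
    apply forall_congr'
    intro i
    simp only [hnC]
    push_cast
    rfl
  have hmemC' : ∀ y : Fin d → ℤ, y ∈ boxF u' nC ↔
      ∀ i, u i + (if i = j then (2:ℤ)^l else 0) ≤ y i ∧
        y i < u i + (if i = j then (2:ℤ)^l else 0) + 2^l := by
    intro y
    rw [mem_boxF]
    apply forall_congr'
    intro i
    simp only [hnC, hu']
    push_cast
    rfl
  have hUeq : boxF u nU = boxF u nC ∪ boxF u' nC := by
    ext y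
    rw [Finset.mem_union, hmemU, hmemC, hmemC']
    constructor
    · intro hy
      rcases lt_or_ge (y j) (u j + 2 ^ l) with hcase | hcase
      · left
        intro i
        have h := hy i
        by_cases hij : i = j
        · subst hij
          exact ⟨h.1, hcase⟩
        · simp only [if_neg hij] at h
          exact ⟨h.1, by linarith [h.2]⟩
      · right
        intro i
        have h := hy i
        by_cases hij : i = j
        · subst hij
          simp only [eq_self_iff_true, if_true] at h ⊢
          exact ⟨hcase, by linarith [h.2]⟩
        · simp only [if_neg hij] at h ⊢
          simpa using h
    · intro hy i
      by_cases hij : i = j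
      · subst hij
        simp only [eq_self_iff_true, if_true]
        rcases hy with hy | hy
        · have h := hy i
          exact ⟨h.1, by linarith [h.2]⟩
        · have h := hy i
          simp only [eq_self_iff_true, if_true] at h
          exact ⟨by linarith [h.1], by linarith [h.2]⟩
      · simp only [if_neg hij]
        rcases hy with hy | hy
        · have h := hy i
          exact ⟨h.1, by linarith [h.2]⟩
        · have h := hy i
          simp only [if_neg hij] at h
          exact ⟨by linarith [h.1], by linarith [h.2]⟩
  have hdisj : Disjoint (boxF u nC) (boxF u' nC) := by
    rw [Finset.disjoint_left]
    intro y hy hy'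
    have h1' := (hmemC y).1 hy j
    have h2' := (hmemC' y).1 hy' j
    simp only [eq_self_iff_true, if_true] at h2'
    linarith [h1'.2, h2'.1]
  set SC : Finset (Fin d → ℤ) := (boxF u nC).filter (· ∈ A) with hSC
  set SC' : Finset (Fin d → ℤ) := (boxF u' nC).filter (· ∈ A) with hSC'
  set SA : Finset (Fin d → ℤ) := (boxF u nU).filter (· ∈ A) with hSA
  have hSAeq : SA = SC ∪ SC' := by
    rw [hSA, hSC, hSC', hUeq, Finset.filter_union]
  have hdisj2 : Disjoint SC SC' :=
    hdisj.mono (Finset.filter_subset _ _) (Finset.filter_subset _ _)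
  have hSAcard : SA.card = SC.card + SC'.card := by
    rw [hSAeq, Finset.card_union_of_disjoint hdisj2]
  -- cube cardinalities
  have hcube : ∀ v : Fin d → ℤ, (boxF v nC).card = 2 ^ (l * d) := by
    intro v
    rw [card_boxF]
    simp only [hnC]
    rw [Finset.prod_const, Finset.card_univ, Fintype.card_fin, ← pow_mul]
  have hUcard : (boxF u nU).card = 2 ^ (l * d) + 2 ^ (l * d) := by
    rw [hUeq, Finset.card_union_of_disjoint hdisj, hcube, hcube]
  -- ncard translations
  have hncC : (({y : Fin d → ℤ | ∀ i, u i ≤ y i ∧ y i < u i + 2 ^ l} ∩ A).ncard : ℝ)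
      = (SC.card : ℝ) := by
    congr 1
    rw [← Set.ncard_coe_finset SC]
    congr 1
    rw [hCset, hSC]
    ext y
    simp [Finset.mem_filter]
  have hncC' : (({y : Fin d → ℤ |
      ∀ i, u i + (if i = j then 2 ^ l else 0) ≤ y i ∧
        y i < u i + (if i = j then 2 ^ l else 0) + 2 ^ l} ∩ A).ncard : ℝ) = (SC'.card : ℝ) := by
    congr 1
    rw [← Set.ncard_coe_finset SC']
    congr 1
    rw [hC'set, hSC']
    ext y
    simp [Finset.mem_filter]
  rw [hncC] at h1
  rw [hncC'] at h2
  -- boundary comparison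
  set X : ℝ := ((({v : Fin d → ℤ | v ∉ A ∧ ∃ w ∈ A, (∑ i, |v i - w i|) = 1} ∩
      ({y | ∀ i, u i ≤ y i ∧ y i < u i + 2 ^ l} ∪
       {y | ∀ i, u i + (if i = j then 2 ^ l else 0) ≤ y i ∧
          y i < u i + (if i = j then 2 ^ l else 0) + 2 ^ l})).ncard : ℝ)) with hX
  have hbdle : ((bdF SA (boxF u nU)).card : ℝ) ≤ X := by
    rw [hX]
    have hsub : (↑(bdF SA (boxF u nU)) : Set (Fin d → ℤ)) ⊆
        ({v : Fin d → ℤ | v ∉ A ∧ ∃ w ∈ A, (∑ i, |v i - w i|) = 1} ∩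
          ({y | ∀ i, u i ≤ y i ∧ y i < u i + 2 ^ l} ∪
           {y | ∀ i, u i + (if i = j then 2 ^ l else 0) ≤ y i ∧
              y i < u i + (if i = j then 2 ^ l else 0) + 2 ^ l})) := by
      intro v hv
      rw [Finset.mem_coe, mem_bdF] at hv
      obtain ⟨hvU, hvS, w, hwS, hwadj⟩ := hv
      constructor
      · constructor
        · intro hvA
          exact hvS (Finset.mem_filter.2 ⟨hvU, hvA⟩)
        · exact ⟨w, (Finset.mem_filter.1 hwS).2, hwadj⟩
      · rw [hCset, hC'set, ← Finset.coe_union, ← hUeq]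
        exact hvU
    have hfin : (({v : Fin d → ℤ | v ∉ A ∧ ∃ w ∈ A, (∑ i, |v i - w i|) = 1} ∩
          ({y | ∀ i, u i ≤ y i ∧ y i < u i + 2 ^ l} ∪
           {y | ∀ i, u i + (if i = j then 2 ^ l else 0) ≤ y i ∧
              y i < u i + (if i = j then 2 ^ l else 0) + 2 ^ l}))).Finite := by
      apply Set.Finite.subset (boxF u nU).finite_toSet
      intro v hv
      rw [Finset.mem_coe]
      have := hv.2
      rw [hCset, hC'set, ← Finset.coe_union, ← hUeq] at this
      exact this
    have := Set.ncard_le_ncard hsub hfin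
    rw [Set.ncard_coe_finset] at this
    exact_mod_cast this
  -- apply key
  have hkey := key (2 ^ l + 2 ^ l) (Finset.univ : Finset (Fin d)) u nU
    (fun i => by rw [hnU]; by_cases hij : i = j <;> simp [hij] <;> omega)
    (fun i hi => absurd (Finset.mem_univ i) hi)
    SA (Finset.filter_subset _ _)
  rw [Finset.card_univ, Fintype.card_fin] at hkey
  -- min lower bounds
  have hSCle : (SC.card : ℝ) ≤ (2:ℝ) ^ (l * d) := by
    have : SC.card ≤ 2 ^ (l * d) := by
      rw [hSC]
      calc ((boxF u nC).filter (· ∈ A)).card ≤ (boxF u nC).card :=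
        Finset.card_le_card (Finset.filter_subset _ _)
        _ = 2 ^ (l * d) := hcube u
    exact_mod_cast this
  have hm1 : (2:ℝ) ^ (l * d) ≤ 2 * (SA.card : ℝ) := by
    have : (SC.card : ℝ) ≤ (SA.card : ℝ) := by
      exact_mod_cast hSAcard ▸ Nat.le_add_right _ _
    linarith
  have hm2 : (2:ℝ) ^ (l * d) ≤ 2 * (((boxF u nU).card : ℝ) - SA.card) := by
    have hU' : ((boxF u nU).card : ℝ) = 2 ^ (l * d) + 2 ^ (l * d) := by
      rw [hUcard]; push_cast; ring
    have hSA' : (SA.card : ℝ) = SC.card + SC'.card := by exact_mod_cast hSAcard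
    rw [hU', hSA']
    linarith
  have hminlb : (2:ℝ) ^ (l * d) ≤
      2 * min (SA.card : ℝ) (((boxF u nU).card : ℝ) - SA.card) := by
    rcases min_cases (SA.card : ℝ) (((boxF u nU).card : ℝ) - SA.card) with ⟨he, _⟩ | ⟨he, _⟩ <;>
      rw [he] <;> [exact hm1; exact hm2]
  -- final arithmetic
  have hbd0 : (0:ℝ) ≤ ((bdF SA (boxF u nU)).card : ℝ) := Nat.cast_nonneg _
  have hNcast : (((2:ℕ) ^ l + 2 ^ l : ℕ) : ℝ) = 2 * 2 ^ l := by push_cast; ring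
  have hE1 : (2:ℝ) ^ (l * d) ≤ 16 * 4 ^ d * 2 ^ l * ((bdF SA (boxF u nU)).card : ℝ) := by
    have := hkey
    rw [hNcast] at this
    nlinarith [hminlb, this]
  have hld : l * (d - 1) + l = l * d := by
    have hgen : ∀ m : ℕ, 1 ≤ m → l * (m - 1) + l = l * m := by
      intro m hm
      obtain ⟨k, rfl⟩ := Nat.exists_eq_add_of_le hm
      rw [Nat.add_sub_cancel_left]
      ring
    exact hgen d hd
  have hsplit : (2:ℝ) ^ (l * d) = 2 ^ (l * (d - 1)) * 2 ^ l := by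
    rw [← pow_add, hld]
  have h2l : (0:ℝ) < 2 ^ l := by positivity
  have h44 : (4:ℝ) ^ (d + 2) = 16 * 4 ^ d := by rw [pow_add]; ring
  have hmain : (2:ℝ) ^ (l * (d - 1)) * 2 ^ l ≤ (4 ^ (d + 2) * X) * 2 ^ l := by
    rw [← hsplit, h44]
    have hc : (0:ℝ) ≤ 16 * 4 ^ d * 2 ^ l := by positivity
    nlinarith [hE1, mul_le_mul_of_nonneg_left hbdle hc]
  exact le_of_mul_le_mul_right hmain h2l
end
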